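/- For each n ≥ 0, the map sending a pair (A, B) of commuting unitary matrices in U(n) to the unordered n-tuple of pairs of eigenvalues [(α₁,β₁),…,(αₙ,βₙ)] (with respect to a common orthonormal eigenbasis) induces a bijection Hom(ℤ×ℤ, U(n))/U(n) → Symⁿ(S¹×S¹). -/

import Mathlib

open Matrix

/-- Pairs of commuting `n × n` unitary matrices. -/
def CommPair (n : ℕ) : Type :=
  {p : Matrix.unitaryGroup (Fin n) ℂ × Matrix.unitaryGroup (Fin n) ℂ // p.1 * p.2 = p.2 * p.1}

/-- Simultaneous conjugation relation on commuting pairs; the quotient is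
`Hom(ℤ×ℤ, U(n))/U(n)`. -/
def conjRel (n : ℕ) : CommPair n → CommPair n → Prop := fun p q =>
  ∃ U : Matrix.unitaryGroup (Fin n) ℂ,
    q.1.1 = U * p.1.1 * U⁻¹ ∧ q.1.2 = U * p.1.2 * U⁻¹

namespace CommTorus

variable {n : ℕ}

def IsEigData (p : CommPair n) (e : Fin n → (Fin n → ℂ)) (α β : Fin n → Circle) : Prop :=
  (∀ i j, star (e i) ⬝ᵥ e j = if i = j then (1:ℂ) else 0) ∧
  (∀ i, (p.1.1 : Matrix (Fin n) (Fin n) ℂ) *ᵥ e i = (α i : ℂ) • e i) ∧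
  (∀ i, (p.1.2 : Matrix (Fin n) (Fin n) ℂ) *ᵥ e i = (β i : ℂ) • e i)

def mset (α β : Fin n → Circle) : Sym (Circle × Circle) n :=
  ⟨Multiset.map (fun i => (α i, β i)) Finset.univ.val, by simp⟩


def colM (e : Fin n → (Fin n → ℂ)) : Matrix (Fin n) (Fin n) ℂ := Matrix.of fun r i => e i r

lemma colM_unitary {e : Fin n → (Fin n → ℂ)}
    (horm : ∀ i j, star (e i) ⬝ᵥ e j = if i = j then (1:ℂ) else 0) :
    (colM e)ᴴ * colM e = 1 := by
  ext i j
  simpa [Matrix.mul_apply, colM, Matrix.conjTranspose_apply, Matrix.one_apply,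
    dotProduct] using horm i j

lemma mul_colM_eq {e : Fin n → (Fin n → ℂ)} {A : Matrix (Fin n) (Fin n) ℂ} {μ : Fin n → ℂ}
    (h : ∀ i, A *ᵥ e i = μ i • e i) : A * colM e = colM e * diagonal μ := by
  ext r j
  rw [Matrix.mul_diagonal, mul_comm]
  simp only [Matrix.mul_apply, colM, Matrix.of_apply]
  simpa [Matrix.mulVec, dotProduct] using congrFun (h j) r

lemma card_filter_eq {γ : Type*} [DecidableEq γ] (W : Matrix (Fin n) (Fin n) ℂ)
    (hW : Wᴴ * W = 1) (g' g : Fin n → γ)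
    (hsupp : ∀ i j, W i j ≠ 0 → g' i = g j) :
    Multiset.map g' Finset.univ.val = Multiset.map g Finset.univ.val := by
  have hWr : W * Wᴴ = 1 := mul_eq_one_comm.mp hW
  ext c
  rw [Multiset.count_map, Multiset.count_map]
  set S := Finset.univ.filter fun i => c = g' i with hS
  set T := Finset.univ.filter fun j => c = g j with hT
  have key : ((S.card : ℂ)) = (T.card : ℂ) := by
    have hrow : ∀ i ∈ S, ∑ j ∈ T, star (W i j) * W i j = 1 := by
      intro i hi
      have h1 : ∑ j, star (W i j) * W i j = 1 := by
        have h2 := (Matrix.ext_iff.2 hWr) i i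
        simpa [Matrix.mul_apply, Matrix.conjTranspose_apply, mul_comm] using h2
      rw [← h1]
      refine Finset.sum_subset (Finset.subset_univ T) (fun j _ hj => ?_)
      by_cases hw : W i j = 0
      · simp [hw]
      · exact absurd (Finset.mem_filter.mpr ⟨Finset.mem_univ j,
          ((Finset.mem_filter.mp hi).2.trans (hsupp i j hw))⟩) hj
    have hcol : ∀ j ∈ T, ∑ i ∈ S, star (W i j) * W i j = 1 := by
      intro j hj
      have h1 : ∑ i, star (W i j) * W i j = 1 := by
        have h2 := (Matrix.ext_iff.2 hW) j j
        simpa [Matrix.mul_apply, Matrix.conjTranspose_apply] using h2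
      rw [← h1]
      refine Finset.sum_subset (Finset.subset_univ S) (fun i _ hi => ?_)
      by_cases hw : W i j = 0
      · simp [hw]
      · exact absurd (Finset.mem_filter.mpr ⟨Finset.mem_univ i,
          ((Finset.mem_filter.mp hj).2.trans (hsupp i j hw).symm)⟩) hi
    calc (S.card : ℂ) = ∑ i ∈ S, (1:ℂ) := by simp
    _ = ∑ i ∈ S, ∑ j ∈ T, star (W i j) * W i j := by
        exact Finset.sum_congr rfl (fun i hi => (hrow i hi).symm)
    _ = ∑ j ∈ T, ∑ i ∈ S, star (W i j) * W i j := Finset.sum_comm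
    _ = ∑ j ∈ T, (1:ℂ) := Finset.sum_congr rfl hcol
    _ = (T.card : ℂ) := by simp
  have := Nat.cast_inj (R := ℂ) |>.mp key
  simpa [hS, hT, Finset.card, Finset.filter] using this

lemma exists_perm {γ : Type*} (f g : Fin n → γ)
    (h : Multiset.map f Finset.univ.val = Multiset.map g Finset.univ.val) :
    ∃ σ : Equiv.Perm (Fin n), ∀ i, g i = f (σ i) := by
  classical
  letI : LinearOrder γ := linearOrderOfSTO WellOrderingRel
  have hp : List.Perm (List.ofFn f) (List.ofFn g) := by
    rw [Fin.univ_val_map, Fin.univ_val_map] at h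
    exact Multiset.coe_eq_coe.mp h
  have hm : List.Perm (List.ofFn (f ∘ Tuple.sort f)) (List.ofFn (g ∘ Tuple.sort g)) :=
    (((Tuple.sort f).ofFn_comp_perm f).trans hp).trans ((Tuple.sort g).ofFn_comp_perm g).symm
  have heq : f ∘ Tuple.sort f = g ∘ Tuple.sort g :=
    List.ofFn_injective <| List.Perm.eq_of_sortedLE
      (Tuple.monotone_sort f).sortedLE_ofFn (Tuple.monotone_sort g).sortedLE_ofFn hm
  refine ⟨((Tuple.sort g).symm).trans (Tuple.sort f), fun i => ?_⟩
  have := congrFun heq ((Tuple.sort g).symm i)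
  simpa using this.symm

private lemma cancelL {F X : Matrix (Fin n) (Fin n) ℂ} (hF : F * Fᴴ = 1) :
    F * (Fᴴ * X) = X := by rw [← Matrix.mul_assoc, hF, Matrix.one_mul]

private lemma cancelL' {F X : Matrix (Fin n) (Fin n) ℂ} (hF : Fᴴ * F = 1) :
    Fᴴ * (F * X) = X := by rw [← Matrix.mul_assoc, hF, Matrix.one_mul]

lemma mset_eq_of_conj {p q : CommPair n} {e f : Fin n → (Fin n → ℂ)}
    {α β α' β' : Fin n → Circle} (hpq : conjRel n p q)
    (h1 : IsEigData p e α β) (h2 : IsEigData q f α' β') : mset α β = mset α' β' := by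
  classical
  obtain ⟨U, hU1, hU2⟩ := hpq
  set A : Matrix (Fin n) (Fin n) ℂ := ↑p.1.1 with hA
  set B : Matrix (Fin n) (Fin n) ℂ := ↑p.1.2 with hB
  set A' : Matrix (Fin n) (Fin n) ℂ := ↑q.1.1 with hA'
  set B' : Matrix (Fin n) (Fin n) ℂ := ↑q.1.2 with hB'
  set Um : Matrix (Fin n) (Fin n) ℂ := ↑U with hUm
  have hUu : star Um * Um = 1 := U.2.1
  have hUu' : Um * star Um = 1 := U.2.2
  have hqA : A' = Um * A * Umᴴ := by
    rw [hA', hU1]; simp [hUm, hA, Matrix.star_eq_conjTranspose]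
  have hqB : B' = Um * B * Umᴴ := by
    rw [hB', hU2]; simp [hUm, hB, Matrix.star_eq_conjTranspose]
  rw [Matrix.star_eq_conjTranspose] at hUu hUu'
  set E := colM e
  set F := colM f
  have hE : Eᴴ * E = 1 := colM_unitary h1.1
  have hF : Fᴴ * F = 1 := colM_unitary h2.1
  have hE' : E * Eᴴ = 1 := mul_eq_one_comm.mp hE
  have hF' : F * Fᴴ = 1 := mul_eq_one_comm.mp hF
  set a : Fin n → ℂ := fun i => (α i : ℂ)
  set b : Fin n → ℂ := fun i => (β i : ℂ)
  set a' : Fin n → ℂ := fun i => (α' i : ℂ)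
  set b' : Fin n → ℂ := fun i => (β' i : ℂ)
  have hAE : A * E = E * diagonal a := mul_colM_eq h1.2.1
  have hBE : B * E = E * diagonal b := mul_colM_eq h1.2.2
  have hA'F : A' * F = F * diagonal a' := mul_colM_eq h2.2.1
  have hB'F : B' * F = F * diagonal b' := mul_colM_eq h2.2.2
  set W : Matrix (Fin n) (Fin n) ℂ := Fᴴ * (Um * E) with hW
  have hWu : Wᴴ * W = 1 := by
    rw [hW, Matrix.conjTranspose_mul, Matrix.conjTranspose_mul,
      Matrix.conjTranspose_conjTranspose]
    calc Eᴴ * Umᴴ * F * (Fᴴ * (Um * E))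
        = Eᴴ * Umᴴ * (F * (Fᴴ * (Um * E))) := by rw [Matrix.mul_assoc]
      _ = Eᴴ * Umᴴ * (Um * E) := by rw [cancelL hF']
      _ = Eᴴ * (Umᴴ * (Um * E)) := by rw [Matrix.mul_assoc]
      _ = Eᴴ * E := by rw [← Matrix.mul_assoc Umᴴ, hUu, Matrix.one_mul]
      _ = 1 := hE
  -- A' * (Um * E) = (Um * E) * diagonal a
  have keyA : A' * (Um * E) = Um * E * diagonal a := by
    rw [hqA]
    calc Um * A * Umᴴ * (Um * E) = Um * A * (Umᴴ * (Um * E)) := by rw [Matrix.mul_assoc]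
      _ = Um * A * E := by rw [← Matrix.mul_assoc Umᴴ, hUu, Matrix.one_mul]
      _ = Um * (A * E) := by rw [Matrix.mul_assoc]
      _ = Um * (E * diagonal a) := by rw [hAE]
      _ = Um * E * diagonal a := by rw [Matrix.mul_assoc]
  have keyB : B' * (Um * E) = Um * E * diagonal b := by
    rw [hqB]
    calc Um * B * Umᴴ * (Um * E) = Um * B * (Umᴴ * (Um * E)) := by rw [Matrix.mul_assoc]
      _ = Um * B * E := by rw [← Matrix.mul_assoc Umᴴ, hUu, Matrix.one_mul]
      _ = Um * (B * E) := by rw [Matrix.mul_assoc]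
      _ = Um * (E * diagonal b) := by rw [hBE]
      _ = Um * E * diagonal b := by rw [Matrix.mul_assoc]
  have hDa : diagonal a' * W = W * diagonal a := by
    have hDa' : diagonal a' = Fᴴ * (A' * F) := by
      rw [hA'F, cancelL' hF]
    rw [hDa', hW]
    calc Fᴴ * (A' * F) * (Fᴴ * (Um * E))
        = Fᴴ * (A' * (F * (Fᴴ * (Um * E)))) := by simp only [Matrix.mul_assoc]
      _ = Fᴴ * (A' * (Um * E)) := by rw [cancelL hF']
      _ = Fᴴ * (Um * E * diagonal a) := by rw [keyA]
      _ = Fᴴ * (Um * E) * diagonal a := by simp only [Matrix.mul_assoc]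
  have hDb : diagonal b' * W = W * diagonal b := by
    have hDb' : diagonal b' = Fᴴ * (B' * F) := by
      rw [hB'F, cancelL' hF]
    rw [hDb', hW]
    calc Fᴴ * (B' * F) * (Fᴴ * (Um * E))
        = Fᴴ * (B' * (F * (Fᴴ * (Um * E)))) := by simp only [Matrix.mul_assoc]
      _ = Fᴴ * (B' * (Um * E)) := by rw [cancelL hF']
      _ = Fᴴ * (Um * E * diagonal b) := by rw [keyB]
      _ = Fᴴ * (Um * E) * diagonal b := by simp only [Matrix.mul_assoc]
  have hsupp : ∀ i j, W i j ≠ 0 → (α' i, β' i) = (α j, β j) := by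
    intro i j hw
    have ha := Matrix.ext_iff.2 hDa i j
    have hb := Matrix.ext_iff.2 hDb i j
    rw [Matrix.diagonal_mul, Matrix.mul_diagonal] at ha hb
    rw [mul_comm (W i j)] at ha hb
    have ha' : α' i = α j := Circle.coe_injective (mul_right_cancel₀ hw ha)
    have hb' : β' i = β j := Circle.coe_injective (mul_right_cancel₀ hw hb)
    rw [ha', hb']
  have := card_filter_eq W hWu (fun i => (α' i, β' i)) (fun j => (α j, β j)) hsupp
  exact Subtype.ext this.symm

lemma conj_of_mset_eq {p q : CommPair n} {e f : Fin n → (Fin n → ℂ)}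
    {α β α' β' : Fin n → Circle}
    (h1 : IsEigData p e α β) (h2 : IsEigData q f α' β') (h : mset α β = mset α' β') :
    conjRel n p q := by
  obtain ⟨σ, hσ⟩ := exists_perm (fun i => (α i, β i)) (fun i => (α' i, β' i))
    (congrArg Subtype.val h)
  have hα : ∀ i, α' i = α (σ i) := fun i => congrArg Prod.fst (hσ i)
  have hβ : ∀ i, β' i = β (σ i) := fun i => congrArg Prod.snd (hσ i)
  set A : Matrix (Fin n) (Fin n) ℂ := ↑p.1.1 with hA
  set B : Matrix (Fin n) (Fin n) ℂ := ↑p.1.2 with hB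
  set A' : Matrix (Fin n) (Fin n) ℂ := ↑q.1.1 with hA'
  set B' : Matrix (Fin n) (Fin n) ℂ := ↑q.1.2 with hB'
  set E := colM (fun i => e (σ i)) with hEdef
  set F := colM f with hFdef
  have horm : ∀ i j, star (e (σ i)) ⬝ᵥ e (σ j) = if i = j then (1:ℂ) else 0 := by
    intro i j
    rw [h1.1 (σ i) (σ j)]
    simp [σ.injective.eq_iff]
  have hE : Eᴴ * E = 1 := colM_unitary horm
  have hF : Fᴴ * F = 1 := colM_unitary h2.1
  have hE' : E * Eᴴ = 1 := mul_eq_one_comm.mp hE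
  have hF' : F * Fᴴ = 1 := mul_eq_one_comm.mp hF
  set a : Fin n → ℂ := fun i => (α (σ i) : ℂ)
  set b : Fin n → ℂ := fun i => (β (σ i) : ℂ)
  have hAE : A * E = E * diagonal a := mul_colM_eq (fun i => h1.2.1 (σ i))
  have hBE : B * E = E * diagonal b := mul_colM_eq (fun i => h1.2.2 (σ i))
  have hA'F : A' * F = F * diagonal a := by
    have : ∀ i, A' *ᵥ f i = a i • f i := by
      intro i; rw [show a i = (α' i : ℂ) by rw [hα i]]; exact h2.2.1 i
    exact mul_colM_eq this
  have hB'F : B' * F = F * diagonal b := by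
    have : ∀ i, B' *ᵥ f i = b i • f i := by
      intro i; rw [show b i = (β' i : ℂ) by rw [hβ i]]; exact h2.2.2 i
    exact mul_colM_eq this
  set Um : Matrix (Fin n) (Fin n) ℂ := F * Eᴴ with hUm
  have hUmem : Um ∈ Matrix.unitaryGroup (Fin n) ℂ := by
    rw [Matrix.mem_unitaryGroup_iff']
    rw [Matrix.star_eq_conjTranspose, hUm, Matrix.conjTranspose_mul,
      Matrix.conjTranspose_conjTranspose]
    calc E * Fᴴ * (F * Eᴴ) = E * (Fᴴ * (F * Eᴴ)) := by rw [Matrix.mul_assoc]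
      _ = E * Eᴴ := by rw [cancelL' hF]
      _ = 1 := hE'
  have conjA : A' = Um * A * Umᴴ := by
    have : Umᴴ = E * Fᴴ := by
      rw [hUm, Matrix.conjTranspose_mul, Matrix.conjTranspose_conjTranspose]
    rw [this, hUm]
    calc A' = A' * (F * Fᴴ) := by rw [hF', Matrix.mul_one]
      _ = A' * F * Fᴴ := by rw [Matrix.mul_assoc]
      _ = F * diagonal a * Fᴴ := by rw [hA'F]
      _ = F * (Eᴴ * (E * diagonal a)) * Fᴴ := by rw [cancelL' hE]
      _ = F * (Eᴴ * (A * E)) * Fᴴ := by rw [hAE]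
      _ = F * Eᴴ * A * (E * Fᴴ) := by simp only [Matrix.mul_assoc]
  have conjB : B' = Um * B * Umᴴ := by
    have : Umᴴ = E * Fᴴ := by
      rw [hUm, Matrix.conjTranspose_mul, Matrix.conjTranspose_conjTranspose]
    rw [this, hUm]
    calc B' = B' * (F * Fᴴ) := by rw [hF', Matrix.mul_one]
      _ = B' * F * Fᴴ := by rw [Matrix.mul_assoc]
      _ = F * diagonal b * Fᴴ := by rw [hB'F]
      _ = F * (Eᴴ * (E * diagonal b)) * Fᴴ := by rw [cancelL' hE]
      _ = F * (Eᴴ * (B * E)) * Fᴴ := by rw [hBE]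
      _ = F * Eᴴ * B * (E * Fᴴ) := by simp only [Matrix.mul_assoc]
  refine ⟨⟨Um, hUmem⟩, ?_, ?_⟩
  · apply Subtype.ext
    simpa [Matrix.star_eq_conjTranspose] using conjA
  · apply Subtype.ext
    simpa [Matrix.star_eq_conjTranspose] using conjB

-- diagonal matrix of circle values is unitary
lemma diag_unitary (γ : Fin n → Circle) :
    diagonal (fun i => (γ i : ℂ)) ∈ Matrix.unitaryGroup (Fin n) ℂ := by
  rw [Matrix.mem_unitaryGroup_iff']
  rw [Matrix.star_eq_conjTranspose, Matrix.diagonal_conjTranspose]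
  rw [Matrix.diagonal_mul_diagonal]
  convert Matrix.diagonal_one with i
  simp only [Pi.star_apply, RCLike.star_def]
  have : (starRingEnd ℂ) (γ i : ℂ) * (γ i : ℂ) = Complex.normSq (γ i : ℂ) := by
    rw [mul_comm, Complex.mul_conj]
  rw [this, Circle.normSq_coe, Complex.ofReal_one]

lemma single_orm : ∀ i j : Fin n, star (Pi.single i 1 : Fin n → ℂ) ⬝ᵥ Pi.single j 1
    = if i = j then (1:ℂ) else 0 := by
  intro i j
  simp only [dotProduct, Pi.star_apply, Pi.single_apply]
  rcases eq_or_ne i j with rfl | h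
  · simp
  · rw [if_neg h]
    refine Finset.sum_eq_zero fun r _ => ?_
    by_cases hri : r = i <;> by_cases hrj : r = j <;> simp_all

lemma diag_mulVec_single (d : Fin n → ℂ) (i : Fin n) :
    diagonal d *ᵥ (Pi.single i 1 : Fin n → ℂ) = d i • (Pi.single i 1 : Fin n → ℂ) := by
  funext r
  rw [Matrix.mulVec_diagonal]
  rcases eq_or_ne r i with rfl | hr
  · simp
  · simp [Pi.single_apply, hr]

lemma surj_aux0 (s : Sym (Circle × Circle) n) :
    ∃ (p : CommPair n) (e : Fin n → (Fin n → ℂ)) (α β : Fin n → Circle),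
      IsEigData p e α β ∧ mset α β = s := by
  classical
  have hl : s.1.toList.length = n := by rw [Multiset.length_toList]; exact s.2
  set γ : Fin n → Circle × Circle := fun i => s.1.toList.get (Fin.cast hl.symm i) with hγ
  set α : Fin n → Circle := fun i => (γ i).1
  set β : Fin n → Circle := fun i => (γ i).2
  set A := diagonal (fun i => (α i : ℂ)) with hA
  set B := diagonal (fun i => (β i : ℂ)) with hB
  have hcomm : A * B = B * A := by
    rw [hA, hB, Matrix.diagonal_mul_diagonal, Matrix.diagonal_mul_diagonal]
    have : (fun i => (α i : ℂ) * β i) = fun i => (β i : ℂ) * α i := funext fun i => mul_comm _ _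
    rw [this]
  refine ⟨⟨⟨⟨A, diag_unitary α⟩, ⟨B, diag_unitary β⟩⟩, Subtype.ext hcomm⟩,
    fun i => Pi.single i 1, α, β, ⟨single_orm, fun i => diag_mulVec_single _ i,
      fun i => diag_mulVec_single _ i⟩, ?_⟩
  apply Subtype.ext
  show Multiset.map (fun i => (α i, β i)) Finset.univ.val = s.1
  have h1 : (fun i => (α i, β i)) = γ := by funext i; rfl
  rw [h1, Fin.univ_val_map]
  have : List.ofFn γ = s.1.toList := by
    refine List.ext_get (by simp [hl]) (fun i h1 h2 => ?_)
    simp [hγ]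
    rfl
  rw [this, Multiset.coe_toList]

-- eigenvalues of unitary matrices lie on the circle
lemma unit_norm_eig {M : Matrix (Fin n) (Fin n) ℂ} (hM : Mᴴ * M = 1)
    {x : Fin n → ℂ} {μ : ℂ} (hx : M *ᵥ x = μ • x) (hx1 : star x ⬝ᵥ x = 1) :
    ‖μ‖ = 1 := by
  have s1 : star (M *ᵥ x) ⬝ᵥ (M *ᵥ x) = 1 := by
    rw [Matrix.star_mulVec, Matrix.dotProduct_mulVec, Matrix.vecMul_vecMul, hM,
      Matrix.vecMul_one, hx1]
  rw [hx] at s1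
  have s2 : star (μ • x) ⬝ᵥ (μ • x) = star μ * μ * (star x ⬝ᵥ x) := by
    rw [star_smul, smul_dotProduct, dotProduct_smul, smul_smul, smul_eq_mul,
      mul_assoc]
  rw [s2, hx1, mul_one] at s1
  have : Complex.normSq μ = 1 := by
    have := s1
    rw [Complex.star_def, ← Complex.normSq_eq_conj_mul_self] at this
    exact_mod_cast this
  have habs : ‖μ‖ = 1 := by
    have := Complex.sq_norm μ
    nlinarith [norm_nonneg μ, Complex.sq_norm μ]
  simpa using habs


open Module.End in
lemma joint_onb (T : Fin 4 → Module.End ℂ (EuclideanSpace ℂ (Fin n)))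
    (hsym : ∀ j, (T j).IsSymmetric) (hcommT : Pairwise (Function.onFun Commute T)) :
    ∃ (b : OrthonormalBasis (Fin n) ℂ (EuclideanSpace ℂ (Fin n)))
      (χf : Fin n → Fin 4 → ℂ),
      ∀ i j, T j (b i) = (χf i j) • b i := by
  classical
  have hsup : (⨆ χ : Fin 4 → ℂ, ⨅ j, Module.End.eigenspace (T j) (χ j)) = ⊤ :=
    LinearMap.IsSymmetric.iSup_iInf_eq_top_of_commute hsym hcommT
  have hinj : Function.Injective
      (fun (χ : ∀ j : Fin 4, (T j).Eigenvalues) (j : Fin 4) => (χ j : ℂ)) := by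
    intro χ χ' h
    funext j
    exact Subtype.ext (congrFun h j)
  have horth := (LinearMap.IsSymmetric.orthogonalFamily_iInf_eigenspaces hsym).comp hinj
  have hVtop : (⨆ χ : ∀ j : Fin 4, (T j).Eigenvalues,
      ⨅ j, Module.End.eigenspace (T j) ((χ j : ℂ))) = ⊤ := by
    apply le_antisymm le_top
    rw [← hsup]
    refine iSup_le fun χ => ?_
    by_cases hχ : ∀ j, (T j).HasEigenvalue (χ j)
    · exact le_iSup_of_le (fun j => ⟨χ j, hχ j⟩) le_rfl
    · push_neg at hχ
      obtain ⟨j, hj⟩ := hχ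
      have hbot : Module.End.eigenspace (T j) (χ j) = ⊥ := by
        by_contra hb
        exact hj (Module.End.hasEigenvalue_iff.mpr hb)
      exact le_trans (iInf_le _ j) (by rw [hbot]; exact bot_le)
  have hint : DirectSum.IsInternal
      (fun χ : ∀ j : Fin 4, (T j).Eigenvalues =>
        ⨅ j, Module.End.eigenspace (T j) ((χ j : ℂ))) :=
    horth.isInternal_iff.mpr (by rw [hVtop, Submodule.top_orthogonal_eq_bot])
  have hn : Module.finrank ℂ (EuclideanSpace ℂ (Fin n)) = n := finrank_euclideanSpace_fin
  refine ⟨hint.subordinateOrthonormalBasis hn horth,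
    fun i j => ((hint.subordinateOrthonormalBasisIndex hn i horth) j : ℂ), fun i j => ?_⟩
  have hmem := hint.subordinateOrthonormalBasis_subordinate hn i horth
  exact Module.End.mem_eigenspace_iff.mp ((Submodule.mem_iInf _).mp hmem j)

set_option maxHeartbeats 1000000 in
open Module.End LinearMap.IsSymmetric in
lemma exists_eigData (p : CommPair n) : ∃ e α β, IsEigData p e α β := by
  classical
  set A : Matrix (Fin n) (Fin n) ℂ := ↑p.1.1 with hAdef
  set B : Matrix (Fin n) (Fin n) ℂ := ↑p.1.2 with hBdef
  have hAu : Aᴴ * A = 1 := by rw [← Matrix.star_eq_conjTranspose]; exact p.1.1.2.1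
  have hAu' : A * Aᴴ = 1 := by rw [← Matrix.star_eq_conjTranspose]; exact p.1.1.2.2
  have hBu : Bᴴ * B = 1 := by rw [← Matrix.star_eq_conjTranspose]; exact p.1.2.2.1
  have hBu' : B * Bᴴ = 1 := by rw [← Matrix.star_eq_conjTranspose]; exact p.1.2.2.2
  have hABc : A * B = B * A := congrArg Subtype.val p.2
  -- commutation facts
  have cAAs : Commute A Aᴴ := hAu'.trans hAu.symm
  have cBBs : Commute B Bᴴ := hBu'.trans hBu.symm
  have cAB : Commute A B := hABc
  have cABs : Commute A Bᴴ := by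
    have h1 : Bᴴ * A * B = A := by
      rw [Matrix.mul_assoc, hABc, ← Matrix.mul_assoc, hBu, Matrix.one_mul]
    calc A * Bᴴ = Bᴴ * A * B * Bᴴ := by rw [h1]
      _ = Bᴴ * A * (B * Bᴴ) := by rw [Matrix.mul_assoc]
      _ = Bᴴ * A := by rw [hBu', Matrix.mul_one]
  have cAsB : Commute Aᴴ B := by
    have h1 : Aᴴ * B * A = B := by
      rw [Matrix.mul_assoc, ← hABc, ← Matrix.mul_assoc, hAu, Matrix.one_mul]
    calc Aᴴ * B = Aᴴ * B * (A * Aᴴ) := by rw [hAu', Matrix.mul_one]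
      _ = Aᴴ * B * A * Aᴴ := (Matrix.mul_assoc _ A Aᴴ).symm
      _ = B * Aᴴ := by rw [h1]
  have cAsBs : Commute Aᴴ Bᴴ := by
    have := congrArg Matrix.conjTranspose hABc
    exact (by simpa [Matrix.conjTranspose_mul] using this.symm : Aᴴ * Bᴴ = Bᴴ * Aᴴ)
  -- the four Hermitian parts
  set M0 : Matrix (Fin n) (Fin n) ℂ := (1:ℂ) • A + (1:ℂ) • Aᴴ with hM0
  set M1 : Matrix (Fin n) (Fin n) ℂ := Complex.I • Aᴴ + (-Complex.I) • A with hM1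
  set M2 : Matrix (Fin n) (Fin n) ℂ := (1:ℂ) • B + (1:ℂ) • Bᴴ with hM2
  set M3 : Matrix (Fin n) (Fin n) ℂ := Complex.I • Bᴴ + (-Complex.I) • B with hM3
  set Ms : Fin 4 → Matrix (Fin n) (Fin n) ℂ := ![M0, M1, M2, M3] with hMs
  have comb : ∀ {X Y Z W : Matrix (Fin n) (Fin n) ℂ} (x y z w : ℂ),
      Commute X Z → Commute X W → Commute Y Z → Commute Y W →
      Commute (x • X + y • Y) (z • Z + w • W) := by
    intro X Y Z W x y z w h1 h2 h3 h4
    exact Commute.add_left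
      (Commute.add_right ((h1.smul_left x).smul_right z) ((h2.smul_left x).smul_right w))
      (Commute.add_right ((h3.smul_left y).smul_right z) ((h4.smul_left y).smul_right w))
  have c00 : Commute M0 M0 := Commute.refl _
  have c11 : Commute M1 M1 := Commute.refl _
  have c22 : Commute M2 M2 := Commute.refl _
  have c33 : Commute M3 M3 := Commute.refl _
  have c01 : Commute M0 M1 := comb _ _ _ _ cAAs (Commute.refl A).symm (Commute.refl Aᴴ) cAAs.symm
  have c02 : Commute M0 M2 := comb _ _ _ _ cAB cABs cAsB cAsBs
  have c03 : Commute M0 M3 := comb _ _ _ _ cABs cAB cAsBs cAsB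
  have c12 : Commute M1 M2 := comb _ _ _ _ cAsB cAsBs cAB cABs
  have c13 : Commute M1 M3 := comb _ _ _ _ cAsBs cAsB cABs cAB
  have c23 : Commute M2 M3 := comb _ _ _ _ cBBs (Commute.refl B).symm (Commute.refl Bᴴ) cBBs.symm
  have hMc : ∀ j k, Commute (Ms j) (Ms k) := by
    intro j k
    fin_cases j <;> fin_cases k <;>
      simp only [hMs, Matrix.cons_val_zero, Matrix.cons_val_one, Matrix.head_cons,
        Matrix.cons_val_two, Matrix.tail_cons, Matrix.cons_val_three] <;>
      first
        | exact c00 | exact c01 | exact c02 | exact c03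
        | exact c01.symm | exact c11 | exact c12 | exact c13
        | exact c02.symm | exact c12.symm | exact c22 | exact c23
        | exact c03.symm | exact c13.symm | exact c23.symm | exact c33
  -- Hermitian
  have hH0 : M0.IsHermitian := by
    show M0ᴴ = M0
    rw [hM0]
    simp only [Matrix.conjTranspose_add, Matrix.conjTranspose_smul,
      Matrix.conjTranspose_conjTranspose, star_one]
    module
  have hH1 : M1.IsHermitian := by
    show M1ᴴ = M1
    rw [hM1]
    simp only [Matrix.conjTranspose_add, Matrix.conjTranspose_smul,
      Matrix.conjTranspose_conjTranspose, star_neg, Complex.star_def, Complex.conj_I]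
    module
  have hH2 : M2.IsHermitian := by
    show M2ᴴ = M2
    rw [hM2]
    simp only [Matrix.conjTranspose_add, Matrix.conjTranspose_smul,
      Matrix.conjTranspose_conjTranspose, star_one]
    module
  have hH3 : M3.IsHermitian := by
    show M3ᴴ = M3
    rw [hM3]
    simp only [Matrix.conjTranspose_add, Matrix.conjTranspose_smul,
      Matrix.conjTranspose_conjTranspose, star_neg, Complex.star_def, Complex.conj_I]
    module
  have herm : ∀ j, (Ms j).IsHermitian := by
    intro j
    fin_cases j <;>
      simp only [hMs, Matrix.cons_val_zero, Matrix.cons_val_one, Matrix.head_cons,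
        Matrix.cons_val_two, Matrix.tail_cons, Matrix.cons_val_three] <;>
      first | exact hH0 | exact hH1 | exact hH2 | exact hH3
  -- pass to euclidean endomorphisms
  have hmulT : ∀ (M N : Matrix (Fin n) (Fin n) ℂ), M * N = N * M →
      Commute (Matrix.toEuclideanLin M) (Matrix.toEuclideanLin N) := by
    intro M N h
    have key : ∀ (M N : Matrix (Fin n) (Fin n) ℂ),
        (Matrix.toEuclideanLin M) * (Matrix.toEuclideanLin N) = Matrix.toEuclideanLin (M * N) := by
      intro M N
      apply LinearMap.ext
      intro v
      simp [Module.End.mul_apply, Matrix.toEuclideanLin_apply, Matrix.mulVec_mulVec]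
    unfold Commute SemiconjBy
    rw [key, key, h]
  obtain ⟨b, χf, heig⟩ := joint_onb (fun j => Matrix.toEuclideanLin (Ms j))
    (fun j => (Matrix.isHermitian_iff_isSymmetric).mp (herm j))
    (fun j k _ => hmulT _ _ (hMc j k))
  set e : Fin n → (Fin n → ℂ) := fun i => (WithLp.equiv 2 (Fin n → ℂ)) (b i) with he
  have horm : ∀ i j, star (e i) ⬝ᵥ e j = if i = j then (1:ℂ) else 0 := by
    intro i j
    have h1 := orthonormal_iff_ite.mp b.orthonormal i j
    rw [EuclideanSpace.inner_eq_star_dotProduct, dotProduct_comm] at h1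
    simpa [he] using h1
  have hMsv : ∀ j i, Ms j *ᵥ e i = (χf i j) • e i := by
    intro j i
    have h1 := congrArg (WithLp.equiv 2 (Fin n → ℂ)) (heig i j)
    simp only [Matrix.toEuclideanLin_apply] at h1
    simpa [he] using h1
  have twoI : (2 * Complex.I) ≠ 0 := by simp [Complex.I_ne_zero]
  have eigA : ∀ i, A *ᵥ e i
      = ((2*Complex.I)⁻¹ * (Complex.I * χf i 0 - χf i 1)) • e i := by
    intro i
    have e0 : (1:ℂ) • (A *ᵥ e i) + (1:ℂ) • (Aᴴ *ᵥ e i) = (χf i 0) • e i := by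
      have h1 := hMsv 0 i
      rw [hMs] at h1
      simp only [Matrix.cons_val_zero] at h1
      rw [hM0, Matrix.add_mulVec, Matrix.smul_mulVec, Matrix.smul_mulVec] at h1
      exact h1
    have e1 : Complex.I • (Aᴴ *ᵥ e i) + (-Complex.I) • (A *ᵥ e i) = (χf i 1) • e i := by
      have h1 := hMsv 1 i
      rw [hMs] at h1
      simp only [Matrix.cons_val_one, Matrix.head_cons, Matrix.cons_val_zero] at h1
      rw [hM1, Matrix.add_mulVec, Matrix.smul_mulVec, Matrix.smul_mulVec] at h1
      exact h1
    have h3 : (2 * Complex.I) • (A *ᵥ e i)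
        = (Complex.I * χf i 0 - χf i 1) • e i := by
      calc (2 * Complex.I) • (A *ᵥ e i)
          = Complex.I • ((1:ℂ) • (A *ᵥ e i) + (1:ℂ) • (Aᴴ *ᵥ e i))
            - (Complex.I • (Aᴴ *ᵥ e i) + (-Complex.I) • (A *ᵥ e i)) := by module
        _ = Complex.I • ((χf i 0) • e i) - (χf i 1) • e i := by rw [e0, e1]
        _ = (Complex.I * χf i 0 - χf i 1) • e i := by module
    calc A *ᵥ e i = (2 * Complex.I)⁻¹ • ((2 * Complex.I) • (A *ᵥ e i)) := by
          rw [smul_smul, inv_mul_cancel₀ twoI, one_smul]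
      _ = (2 * Complex.I)⁻¹ • ((Complex.I * χf i 0 - χf i 1) • e i) := by rw [h3]
      _ = _ := by rw [smul_smul]
  have eigB : ∀ i, B *ᵥ e i
      = ((2*Complex.I)⁻¹ * (Complex.I * χf i 2 - χf i 3)) • e i := by
    intro i
    have e0 : (1:ℂ) • (B *ᵥ e i) + (1:ℂ) • (Bᴴ *ᵥ e i) = (χf i 2) • e i := by
      have h1 := hMsv 2 i
      rw [hMs] at h1
      simp only [Matrix.cons_val_two, Matrix.tail_cons, Matrix.head_cons] at h1
      rw [hM2, Matrix.add_mulVec, Matrix.smul_mulVec, Matrix.smul_mulVec] at h1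
      exact h1
    have e1 : Complex.I • (Bᴴ *ᵥ e i) + (-Complex.I) • (B *ᵥ e i) = (χf i 3) • e i := by
      have h1 := hMsv 3 i
      rw [hMs] at h1
      simp only [Matrix.cons_val_three, Matrix.tail_cons, Matrix.head_cons] at h1
      rw [hM3, Matrix.add_mulVec, Matrix.smul_mulVec, Matrix.smul_mulVec] at h1
      exact h1
    have h3 : (2 * Complex.I) • (B *ᵥ e i)
        = (Complex.I * χf i 2 - χf i 3) • e i := by
      calc (2 * Complex.I) • (B *ᵥ e i)
          = Complex.I • ((1:ℂ) • (B *ᵥ e i) + (1:ℂ) • (Bᴴ *ᵥ e i))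
            - (Complex.I • (Bᴴ *ᵥ e i) + (-Complex.I) • (B *ᵥ e i)) := by module
        _ = Complex.I • ((χf i 2) • e i) - (χf i 3) • e i := by rw [e0, e1]
        _ = (Complex.I * χf i 2 - χf i 3) • e i := by module
    calc B *ᵥ e i = (2 * Complex.I)⁻¹ • ((2 * Complex.I) • (B *ᵥ e i)) := by
          rw [smul_smul, inv_mul_cancel₀ twoI, one_smul]
      _ = (2 * Complex.I)⁻¹ • ((Complex.I * χf i 2 - χf i 3) • e i) := by rw [h3]
      _ = _ := by rw [smul_smul]
  have hxone : ∀ i, star (e i) ⬝ᵥ e i = 1 := by intro i; simpa using horm i i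
  set μA : Fin n → ℂ :=
    fun i => (2*Complex.I)⁻¹ * (Complex.I * χf i 0 - χf i 1) with hμA
  set μB : Fin n → ℂ :=
    fun i => (2*Complex.I)⁻¹ * (Complex.I * χf i 2 - χf i 3) with hμB
  have hnA : ∀ i, ‖μA i‖ = 1 := fun i => unit_norm_eig hAu (eigA i) (hxone i)
  have hnB : ∀ i, ‖μB i‖ = 1 := fun i => unit_norm_eig hBu (eigB i) (hxone i)
  refine ⟨e, fun i => ⟨μA i, mem_sphere_zero_iff_norm.mpr (hnA i)⟩,
    fun i => ⟨μB i, mem_sphere_zero_iff_norm.mpr (hnB i)⟩, horm, fun i => ?_, fun i => ?_⟩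
  · show (↑p.1.1 : Matrix (Fin n) (Fin n) ℂ) *ᵥ e i = μA i • e i
    rw [← hAdef]
    exact eigA i
  · show (↑p.1.2 : Matrix (Fin n) (Fin n) ℂ) *ᵥ e i = μB i • e i
    rw [← hBdef]
    exact eigB i


lemma conjRel_refl (p : CommPair n) : conjRel n p p := ⟨1, by simp, by simp⟩

noncomputable def spec (p : CommPair n) : Sym (Circle × Circle) n :=
  mset (exists_eigData p).choose_spec.choose (exists_eigData p).choose_spec.choose_spec.choose

lemma spec_data (p : CommPair n) :
    IsEigData p (exists_eigData p).choose (exists_eigData p).choose_spec.choose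
      (exists_eigData p).choose_spec.choose_spec.choose :=
  (exists_eigData p).choose_spec.choose_spec.choose_spec

lemma spec_eq {p : CommPair n} {e : Fin n → (Fin n → ℂ)} {α β : Fin n → Circle}
    (h : IsEigData p e α β) : spec p = mset α β :=
  (mset_eq_of_conj (conjRel_refl p) (spec_data p) h).symm ▸ rfl

lemma surj_aux (s : Sym (Circle × Circle) n) : ∃ p : CommPair n, spec p = s := by
  obtain ⟨p, e, α, β, hdata, hms⟩ := surj_aux0 s
  exact ⟨p, by rw [spec_eq hdata, hms]⟩

end CommTorus

open CommTorus in
/-- The map sending a commuting pair `(A, B)` of unitary matrices to the unordered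
`n`-tuple of eigenvalue pairs `[(α₁,β₁),…,(αₙ,βₙ)]` (taken with respect to a common orthonormal
eigenbasis) induces a bijection `Hom(ℤ×ℤ, U(n))/U(n) → Symⁿ(S¹×S¹)`. -/
theorem commuting_pairs_mod_conj_equiv_sym_torus (n : ℕ) :
    ∃ F : Quot (conjRel n) → Sym (Circle × Circle) n,
      Function.Bijective F ∧
      ∀ (p : CommPair n) (e : Fin n → (Fin n → ℂ)) (α β : Fin n → Circle),
        -- `e` is an orthonormal (eigen)basis of ℂⁿ
        (∀ i j, star (e i) ⬝ᵥ e j = if i = j then (1 : ℂ) else 0) →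
        -- each `e i` is a common eigenvector, with eigenvalues `α i` for `A` and `β i` for `B`
        (∀ i, (p.1.1 : Matrix (Fin n) (Fin n) ℂ) *ᵥ e i = (α i : ℂ) • e i) →
        (∀ i, (p.1.2 : Matrix (Fin n) (Fin n) ℂ) *ᵥ e i = (β i : ℂ) • e i) →
        F (Quot.mk _ p) =
          ⟨Multiset.map (fun i => (α i, β i)) Finset.univ.val, by simp⟩ := by
  refine ⟨Quot.lift spec (fun p q hpq => mset_eq_of_conj hpq (spec_data p) (spec_data q)),
    ⟨?_, ?_⟩, ?_⟩
  · intro x y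
    induction x using Quot.ind with | _ p =>
    induction y using Quot.ind with | _ q =>
    intro h
    exact Quot.sound (conj_of_mset_eq (spec_data p) (spec_data q) h)
  · intro s
    obtain ⟨p, hp⟩ := surj_aux s
    exact ⟨Quot.mk _ p, hp⟩
  · intro p e α β h1 h2 h3
    exact spec_eq ⟨h1, h2, h3⟩
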